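/- Let f : [0,1]^d → [0,1]^d be a contraction with Lipschitz constant c ∈ (0,1) in the ℓ_p norm for integer p ≥ 2, and set ε_i = ε^{p^i} · p^{−2·Σ_{j=0}^{i} p^j} for ε ∈ (0,1). Fix a slice s with fixed coordinates {1,…,k−1} and let x* be the unique fixpoint of f|_s. If v ∈ [0,1]^d agrees with s on fixed coordinates and satisfies |f(v)_i − v_i| ≤ ε_i for all i > k, then either |f(v)_k − v_k| ≤ ε_k, or (f(v)_k − v_k)(x*_k − v_k) > 0. -/

import Mathlib

open Finset

/-- The tolerance sequence `ε_i = ε^{p^i} · p^{−2·Σ_{j=0}^{i} p^j}`. -/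
noncomputable def epsSeq (p : ℕ) (ε : ℝ) (i : ℕ) : ℝ :=
  ε ^ (p ^ i) / (p : ℝ) ^ (2 * ∑ j ∈ Finset.range (i + 1), p ^ j)

/-- Approximate pivoting lemma for ℓ_p contractions (`p ≥ 2`).  Let
`f : [0,1]^d → [0,1]^d` be a contraction with Lipschitz constant `c ∈ (0,1)` in the
ℓ_p norm, `ε ∈ (0,1)` and `ε_i = ε^{p^i}·p^{−2Σ_{j=0}^i p^j}` (coordinates indexed
`1,…,d`).  Fix a slice `s` fixing coordinates `{1,…,k−1}` and let `x*` be the unique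
fixpoint of `f|_s`.  If `v` agrees with `s` on the fixed coordinates and
`|f(v)_i − v_i| ≤ ε_i` for all `i > k`, then either `|f(v)_k − v_k| ≤ ε_k` or
`(f(v)_k − v_k)(x*_k − v_k) > 0`. -/
lemma epsSeq_pos {p : ℕ} (hp : 0 < p) {ε : ℝ} (hε : 0 < ε) (n : ℕ) :
    0 < epsSeq p ε n :=
  div_pos (pow_pos hε _) (pow_pos (by exact_mod_cast hp) _)

lemma epsSeq_le_one {p : ℕ} (hp : 0 < p) {ε : ℝ} (hε0 : 0 < ε) (hε1 : ε ≤ 1) (n : ℕ) :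
    epsSeq p ε n ≤ 1 := by
  apply div_le_one_of_le₀
  · calc ε ^ (p ^ n) ≤ 1 := pow_le_one₀ hε0.le hε1
    _ ≤ (p:ℝ) ^ _ := one_le_pow₀ (by exact_mod_cast hp)
  · positivity

lemma epsSeq_succ_le {p : ℕ} (hp : 2 ≤ p) {ε : ℝ} (hε0 : 0 < ε) (hε1 : ε ≤ 1) (n : ℕ) :
    epsSeq p ε (n + 1) ≤ epsSeq p ε n / 4 := by
  unfold epsSeq
  have hpR : (2:ℝ) ≤ (p:ℝ) := by exact_mod_cast hp
  have hnum : ε ^ p ^ (n+1) ≤ ε ^ p ^ n :=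
    pow_le_pow_of_le_one hε0.le hε1 (Nat.pow_le_pow_right (by omega) (by omega))
  have hexp : 2 * ∑ j ∈ Finset.range (n+1+1), p^j
      = 2 * ∑ j ∈ Finset.range (n+1), p^j + 2*p^(n+1) := by
    rw [Finset.sum_range_succ]; ring
  rw [hexp, pow_add ((p:ℝ)) _ _, div_div]
  have h4 : (4:ℝ) ≤ (p:ℝ) ^ (2*p^(n+1)) := by
    calc (4:ℝ) ≤ (p:ℝ)^2 := by nlinarith
    _ ≤ (p:ℝ)^(2*p^(n+1)) := by
        apply pow_le_pow_right₀ (by linarith)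
        have : 1 ≤ p^(n+1) := Nat.one_le_pow _ _ (by omega)
        omega
  apply div_le_div₀ (pow_nonneg hε0.le _) hnum
  · positivity
  · have : (0:ℝ) < (p:ℝ) ^ (2 * ∑ j ∈ Finset.range (n+1), p^j) := by positivity
    nlinarith

lemma epsSeq_add_le {p : ℕ} (hp : 2 ≤ p) {ε : ℝ} (hε0 : 0 < ε) (hε1 : ε ≤ 1) (m j : ℕ) :
    epsSeq p ε (m + j) ≤ epsSeq p ε m * (1/4)^j := by
  induction j with
  | zero => simp
  | succ j ih =>
    have h := epsSeq_succ_le hp hε0 hε1 (m + j)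
    rw [pow_succ, show m + (j+1) = (m+j)+1 from rfl]
    nlinarith

lemma geom_quarter (N : ℕ) : ∑ j ∈ Finset.range N, (1/4:ℝ)^j = 4/3 - (4/3)*(1/4)^N := by
  induction N with
  | zero => simp
  | succ N ih => rw [Finset.sum_range_succ, ih, pow_succ]; ring

lemma epsSeq_pow {p : ℕ} (hp : 0 < p) (ε : ℝ) (n : ℕ) :
    (epsSeq p ε (n+1)) ^ p = (p:ℝ)^2 * epsSeq p ε (n+2) := by
  have hpR : (0:ℝ) < p := by exact_mod_cast hp
  have hS : ∑ j ∈ Finset.range (n+2+1), p^j = p * ∑ j ∈ Finset.range (n+1+1), p^j + 1 := by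
    rw [Finset.sum_range_succ', Finset.mul_sum]
    simp [pow_succ']
  unfold epsSeq
  rw [div_pow, ← pow_mul, ← pow_mul]
  have e1 : p^(n+1) * p = p^(n+2) := (pow_succ p (n+1)).symm
  have e2 : 2 * (∑ j ∈ Finset.range (n+2+1), p^j)
      = 2 * (∑ j ∈ Finset.range (n+1+1), p^j) * p + 2 := by rw [hS]; ring
  rw [e1, e2, pow_add]
  have hD : ((p:ℝ) ^ (2 * (∑ j ∈ Finset.range (n+1+1), p^j) * p)) ≠ 0 := by positivity
  field_simp
  ring

lemma aux_pow_sub_pow_le (n : ℕ) (b δ : ℝ) (hδ0 : 0 ≤ δ) (hδb : δ ≤ b) (hb1 : b ≤ 1) :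
    b ^ n - (b - δ) ^ n ≤ n * δ := by
  induction n with
  | zero => simp
  | succ n ih =>
    have h1 : (0:ℝ) ≤ b - δ := by linarith
    have h2 : (b - δ) ^ n ≤ b ^ n := pow_le_pow_left₀ h1 (by linarith) n
    have h3 : (b - δ) ^ n ≤ 1 := pow_le_one₀ h1 (by linarith)
    have h5 : 0 ≤ b := le_trans hδ0 hδb
    rw [pow_succ, pow_succ]
    push_cast
    nlinarith [mul_le_mul_of_nonneg_left ih h5]

lemma aux_term_bound (n : ℕ) (hn : 1 ≤ n) (b δ t : ℝ) (hb0 : 0 ≤ b) (hb1 : b ≤ 1)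
    (hδ0 : 0 < δ) (hδ1 : δ ≤ 1) (ht0 : 0 ≤ t) (hbt : b - δ ≤ t) :
    b ^ n - t ^ n ≤ n * δ := by
  have hn1 : (1:ℝ) ≤ n := by exact_mod_cast hn
  rcases le_or_gt b δ with h | h
  · have h1 : b ^ n ≤ b := pow_le_of_le_one hb0 hb1 (by omega)
    nlinarith [pow_nonneg ht0 n]
  · have h1 : (b - δ) ^ n ≤ t ^ n := pow_le_pow_left₀ (by linarith) hbt n
    have h2 := aux_pow_sub_pow_le n b δ hδ0.le h.le hb1
    linarith
theorem approx_pivot_lp {d : ℕ} (p : ℕ) (hp : 2 ≤ p)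
    (f : (Fin d → ℝ) → (Fin d → ℝ))
    (c ε : ℝ) (hc : c ∈ Set.Ioo (0 : ℝ) 1) (hε : ε ∈ Set.Ioo (0 : ℝ) 1)
    (hcube : ∀ x : Fin d → ℝ, (∀ i, x i ∈ Set.Icc (0 : ℝ) 1) →
      ∀ i, f x i ∈ Set.Icc (0 : ℝ) 1)
    (hcontr : ∀ x y : Fin d → ℝ, (∀ i, x i ∈ Set.Icc (0 : ℝ) 1) →
      (∀ i, y i ∈ Set.Icc (0 : ℝ) 1) →
      (∑ i, |f x i - f y i| ^ (p : ℝ)) ^ (1 / (p : ℝ)) ≤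
        c * (∑ i, |x i - y i| ^ (p : ℝ)) ^ (1 / (p : ℝ)))
    (k : Fin d) (s : Fin d → ℝ) (hs : ∀ i, i < k → s i ∈ Set.Icc (0 : ℝ) 1)
    (xstar : Fin d → ℝ)
    (hx1 : ∀ i, xstar i ∈ Set.Icc (0 : ℝ) 1)
    (hx2 : ∀ i, i < k → xstar i = s i)
    (hx3 : ∀ i, k ≤ i → f xstar i = xstar i)
    (v : Fin d → ℝ)
    (hv1 : ∀ i, v i ∈ Set.Icc (0 : ℝ) 1)
    (hv2 : ∀ i, i < k → v i = s i)
    (hv3 : ∀ i : Fin d, k < i → |f v i - v i| ≤ epsSeq p ε ((i : ℕ) + 1)) :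
    |f v k - v k| ≤ epsSeq p ε ((k : ℕ) + 1) ∨
      (f v k - v k) * (xstar k - v k) > 0 := by
  obtain ⟨hc0, hc1⟩ := hc
  obtain ⟨hε0, hε1⟩ := hε
  have hp0 : 0 < p := by omega
  have hpne : p ≠ 0 := by omega
  have hEk : 0 < epsSeq p ε ((k:ℕ)+1) := epsSeq_pos hp0 hε0 _
  by_contra hcon
  push_neg at hcon
  obtain ⟨h1, h2⟩ := hcon
  -- Step A : |v k - xstar k| + ε_k ≤ |f v k - xstar k|
  have hAF : |v k - xstar k| + epsSeq p ε ((k:ℕ)+1) ≤ |f v k - xstar k| := by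
    rcases abs_cases (f v k - v k) with ⟨e1, e2⟩ | ⟨e1, e2⟩
    · rw [e1] at h1
      have hx : xstar k ≤ v k := by nlinarith
      rw [abs_of_nonneg (by linarith : (0:ℝ) ≤ v k - xstar k),
          abs_of_nonneg (by linarith : (0:ℝ) ≤ f v k - xstar k)]
      linarith
    · rw [e1] at h1
      have hx : v k ≤ xstar k := by nlinarith
      rw [abs_of_nonpos (by linarith : v k - xstar k ≤ 0),
          abs_of_nonpos (by linarith : f v k - xstar k ≤ 0)]
      linarith
  -- Contraction in natural-power form
  have hconc := hcontr v xstar hv1 hx1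
  simp only [Real.rpow_natCast] at hconc
  have hL0 : (0:ℝ) ≤ ∑ i, |f v i - f xstar i| ^ p :=
    Finset.sum_nonneg fun i _ => by positivity
  have hR0 : (0:ℝ) ≤ ∑ i, |v i - xstar i| ^ p :=
    Finset.sum_nonneg fun i _ => by positivity
  have hmain : (∑ i, |f v i - f xstar i| ^ p) ≤ c ^ p * ∑ i, |v i - xstar i| ^ p := by
    have h2' := pow_le_pow_left₀ (Real.rpow_nonneg hL0 _) hconc p
    rwa [mul_pow, one_div, Real.rpow_inv_natCast_pow hL0 hpne,
      Real.rpow_inv_natCast_pow hR0 hpne] at h2'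
  -- splitting the sums
  set T := Finset.univ.filter (fun i : Fin d => k < i) with hT
  have hkT : k ∉ T := by simp [hT]
  have hfilter : Finset.univ.filter (fun i : Fin d => k ≤ i) = insert k T := by
    ext i
    simp only [hT, Finset.mem_filter, Finset.mem_univ, true_and, Finset.mem_insert]
    constructor
    · intro h
      rcases eq_or_lt_of_le h with h' | h'
      · exact Or.inl h'.symm
      · exact Or.inr h'
    · rintro (rfl | h)
      · exact le_refl _
      · exact le_of_lt h
  have hRsplit : (∑ i, |v i - xstar i| ^ p)
      = |v k - xstar k| ^ p + ∑ i ∈ T, |v i - xstar i| ^ p := by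
    rw [← Finset.sum_filter_add_sum_filter_not Finset.univ (fun i : Fin d => k ≤ i)]
    have hz : ∑ i ∈ Finset.univ.filter (fun i : Fin d => ¬ k ≤ i), |v i - xstar i| ^ p = 0 := by
      apply Finset.sum_eq_zero
      intro i hi
      have hik : i < k := by
        have := (Finset.mem_filter.mp hi).2
        exact lt_of_not_ge this
      rw [hv2 i hik, hx2 i hik]
      simp [hpne]
    rw [hz, add_zero, hfilter, Finset.sum_insert hkT]
  have hLsplit : |f v k - xstar k| ^ p + ∑ i ∈ T, |f v i - xstar i| ^ p
      ≤ ∑ i, |f v i - f xstar i| ^ p := by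
    have heq : |f v k - xstar k| ^ p + ∑ i ∈ T, |f v i - xstar i| ^ p
        = ∑ i ∈ Finset.univ.filter (fun i : Fin d => k ≤ i), |f v i - f xstar i| ^ p := by
      rw [hfilter, Finset.sum_insert hkT]
      congr 1
      · rw [hx3 k le_rfl]
      · apply Finset.sum_congr rfl
        intro i hi
        have hki : k < i := by simpa [hT] using hi
        rw [hx3 i (le_of_lt hki)]
    rw [heq]
    exact Finset.sum_le_sum_of_subset_of_nonneg (Finset.filter_subset _ _)
      (fun i _ _ => by positivity)
  -- strictness
  have hST : (0:ℝ) ≤ ∑ i ∈ T, |f v i - xstar i| ^ p :=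
    Finset.sum_nonneg fun i _ => by positivity
  have hFpos : 0 < |f v k - xstar k| := lt_of_lt_of_le (by positivity) hAF
  have hcpR : (0:ℝ) < c ^ p * ∑ i, |v i - xstar i| ^ p :=
    lt_of_lt_of_le (by positivity : (0:ℝ) < |f v k - xstar k| ^ p)
      (le_trans (le_add_of_nonneg_right hST) (hLsplit.trans hmain))
  have hRpos : (0:ℝ) < ∑ i, |v i - xstar i| ^ p := by
    by_contra h
    push_neg at h
    nlinarith [mul_nonneg (pow_pos hc0 p).le (neg_nonneg.mpr h)]
  have hstrict : c ^ p * (∑ i, |v i - xstar i| ^ p) < ∑ i, |v i - xstar i| ^ p := by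
    have hcp1 : c ^ p < 1 := pow_lt_one₀ hc0.le hc1 hpne
    nlinarith
  have hchain : |f v k - xstar k| ^ p + ∑ i ∈ T, |f v i - xstar i| ^ p
      < |v k - xstar k| ^ p + ∑ i ∈ T, |v i - xstar i| ^ p := by
    calc |f v k - xstar k| ^ p + ∑ i ∈ T, |f v i - xstar i| ^ p
        ≤ ∑ i, |f v i - f xstar i| ^ p := hLsplit
      _ ≤ c ^ p * ∑ i, |v i - xstar i| ^ p := hmain
      _ < ∑ i, |v i - xstar i| ^ p := hstrict
      _ = _ := hRsplit
  -- per-term bound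
  have hterm : ∀ i ∈ T, |v i - xstar i| ^ p - |f v i - xstar i| ^ p
      ≤ (p:ℝ) * epsSeq p ε ((i:ℕ)+1) := by
    intro i hi
    have hki : k < i := by simpa [hT] using hi
    have hEi0 : 0 < epsSeq p ε ((i:ℕ)+1) := epsSeq_pos hp0 hε0 _
    have hEi1 : epsSeq p ε ((i:ℕ)+1) ≤ 1 := epsSeq_le_one hp0 hε0 hε1.le _
    obtain ⟨hvi1, hvi2⟩ := hv1 i
    obtain ⟨hxi1, hxi2⟩ := hx1 i
    have hb1 : |v i - xstar i| ≤ 1 := by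
      rw [abs_le]; constructor <;> linarith
    have htri : |v i - xstar i| ≤ |f v i - v i| + |f v i - xstar i| := by
      have h := abs_sub_le (v i) (f v i) (xstar i)
      rwa [abs_sub_comm (v i) (f v i)] at h
    exact aux_term_bound p (by omega) _ _ _ (abs_nonneg _) hb1 hEi0 hEi1 (abs_nonneg _)
      (by linarith [hv3 i hki])
  have hsum1 : ∑ i ∈ T, |v i - xstar i| ^ p - ∑ i ∈ T, |f v i - xstar i| ^ p
      ≤ ∑ i ∈ T, (p:ℝ) * epsSeq p ε ((i:ℕ)+1) := by
    rw [← Finset.sum_sub_distrib]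
    exact Finset.sum_le_sum hterm
  -- sum of tolerances bound
  have hEsum : ∑ i ∈ T, (p:ℝ) * epsSeq p ε ((i:ℕ)+1) < (epsSeq p ε ((k:ℕ)+1)) ^ p := by
    have himg : ∑ i ∈ T, epsSeq p ε ((i:ℕ)+1)
        = ∑ n ∈ T.image (fun i : Fin d => (i:ℕ)+1), epsSeq p ε n := by
      rw [Finset.sum_image]
      intro a _ b _ h
      exact Fin.ext (by have h' : (a:ℕ) + 1 = (b:ℕ) + 1 := h; omega)
    have hsubset : T.image (fun i : Fin d => (i:ℕ)+1) ⊆ Finset.Ico ((k:ℕ)+2) (d+1) := by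
      intro n hn
      simp only [hT, Finset.mem_image, Finset.mem_filter, Finset.mem_univ, true_and] at hn
      obtain ⟨i, hki, rfl⟩ := hn
      have h1 : (k:ℕ) < (i:ℕ) := hki
      have h2 : (i:ℕ) < d := i.isLt
      simp only [Finset.mem_Ico]
      omega
    have hsub2 : ∑ n ∈ T.image (fun i : Fin d => (i:ℕ)+1), epsSeq p ε n
        ≤ ∑ n ∈ Finset.Ico ((k:ℕ)+2) (d+1), epsSeq p ε n :=
      Finset.sum_le_sum_of_subset_of_nonneg hsubset
        (fun n _ _ => (epsSeq_pos hp0 hε0 n).le)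
    have hE2 : 0 < epsSeq p ε ((k:ℕ)+2) := epsSeq_pos hp0 hε0 _
    have hIco : ∑ n ∈ Finset.Ico ((k:ℕ)+2) (d+1), epsSeq p ε n
        ≤ (4/3) * epsSeq p ε ((k:ℕ)+2) := by
      rw [Finset.sum_Ico_eq_sum_range]
      calc ∑ j ∈ Finset.range (d+1-((k:ℕ)+2)), epsSeq p ε ((k:ℕ)+2+j)
          ≤ ∑ j ∈ Finset.range (d+1-((k:ℕ)+2)), epsSeq p ε ((k:ℕ)+2) * (1/4)^j :=
            Finset.sum_le_sum (fun j _ => epsSeq_add_le hp hε0 hε1.le _ j)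
        _ = epsSeq p ε ((k:ℕ)+2) * ∑ j ∈ Finset.range (d+1-((k:ℕ)+2)), (1/4:ℝ)^j := by
            rw [Finset.mul_sum]
        _ ≤ (4/3) * epsSeq p ε ((k:ℕ)+2) := by
            rw [geom_quarter]
            nlinarith [pow_nonneg (by norm_num : (0:ℝ) ≤ 1/4) (d+1-((k:ℕ)+2))]
    have hsmall : ∑ i ∈ T, epsSeq p ε ((i:ℕ)+1) ≤ (4/3) * epsSeq p ε ((k:ℕ)+2) := by
      rw [himg]; exact hsub2.trans hIco
    have hpow : (epsSeq p ε ((k:ℕ)+1)) ^ p = (p:ℝ)^2 * epsSeq p ε ((k:ℕ)+2) :=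
      epsSeq_pow hp0 ε (k:ℕ)
    have hpR : (2:ℝ) ≤ (p:ℝ) := by exact_mod_cast hp
    calc ∑ i ∈ T, (p:ℝ) * epsSeq p ε ((i:ℕ)+1)
        = (p:ℝ) * ∑ i ∈ T, epsSeq p ε ((i:ℕ)+1) := by rw [Finset.mul_sum]
      _ ≤ (p:ℝ) * ((4/3) * epsSeq p ε ((k:ℕ)+2)) :=
          mul_le_mul_of_nonneg_left hsmall (by linarith)
      _ = (4/3 * (p:ℝ)) * epsSeq p ε ((k:ℕ)+2) := by ring
      _ < (p:ℝ)^2 * epsSeq p ε ((k:ℕ)+2) :=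
          mul_lt_mul_of_pos_right (by nlinarith : (4/3:ℝ) * (p:ℝ) < (p:ℝ)^2) hE2
      _ = _ := hpow.symm
  -- final contradiction
  have hFA : |v k - xstar k| ^ p + (epsSeq p ε ((k:ℕ)+1)) ^ p ≤ |f v k - xstar k| ^ p :=
    calc |v k - xstar k| ^ p + (epsSeq p ε ((k:ℕ)+1)) ^ p
        ≤ (|v k - xstar k| + epsSeq p ε ((k:ℕ)+1)) ^ p :=
          pow_add_pow_le (abs_nonneg _) hEk.le hpne
      _ ≤ |f v k - xstar k| ^ p := pow_le_pow_left₀ (add_nonneg (abs_nonneg _) hEk.le) hAF p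
  linarith
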